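/- Let τ ∈ ℂ with Im τ > 0 and let x, y ∈ ℂ. Then C(x,y|τ)³ − C(−x,−y|τ)³ = C(x+π/3, y|τ)³ − C(−x−π/3, −y|τ)³. -/

import Mathlib

open Complex

/-- The theta series C(x,y|τ). -/
noncomputable def Cfun (x y τ : ℂ) : ℂ :=
  Complex.exp (2 * Complex.I * (x + y)) * ∑' k : ℤ, ∑' l : ℤ,
    Complex.exp (2 * Complex.I * Real.pi * τ *
      ((k : ℂ) ^ 2 + (k : ℂ) * (l : ℂ) + (l : ℂ) ^ 2 + (k : ℂ) + (l : ℂ) + 1 / 3)) *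
    Complex.exp (2 * Complex.I * x * (2 * (l : ℂ) + (k : ℂ))) *
    Complex.exp (2 * Complex.I * y * (2 * (k : ℂ) + (l : ℂ)))

/- ### Auxiliary set-up -/

noncomputable abbrev CQr (p : ℤ × ℤ) : ℝ :=
  (p.1 : ℝ) ^ 2 + p.1 * p.2 + p.2 ^ 2 + p.1 + p.2 + 1 / 3
noncomputable abbrev CAr (p : ℤ × ℤ) : ℝ := 2 * (p.2 : ℝ) + p.1 + 1
noncomputable abbrev CBr (p : ℤ × ℤ) : ℝ := 2 * (p.1 : ℝ) + p.2 + 1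

/-- single term of `C` (with the prefactor distributed in). -/
noncomputable def gterm (x y τ : ℂ) (p : ℤ × ℤ) : ℂ :=
  Complex.exp (2 * (Real.pi : ℂ) * I * τ * (CQr p : ℂ) + 2 * I * x * (CAr p : ℂ)
    + 2 * I * y * (CBr p : ℂ))

lemma norm_gterm (x y τ : ℂ) (p : ℤ × ℤ) :
    ‖gterm x y τ p‖ = Real.exp (-(2 * Real.pi * τ.im * CQr p) - 2 * x.im * CAr p
      - 2 * y.im * CBr p) := by
  rw [gterm, Complex.norm_exp]
  congr 1
  generalize CQr p = Q
  generalize CAr p = A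
  generalize CBr p = B
  simp [Complex.add_re, Complex.mul_re, Complex.mul_im]
  ring

lemma summable_exp_int (a c : ℝ) (hc : 0 < c) :
    Summable fun n : ℤ => Real.exp (a * |(n : ℝ)| - c * (n : ℝ) ^ 2) := by
  have hgeo : Summable fun n : ℤ => Real.exp (-|(n : ℝ)|) := by
    have hnat : Summable fun n : ℕ => Real.exp (-(n : ℝ)) := by
      have : (fun n : ℕ => Real.exp (-(n : ℝ))) = fun n : ℕ => (Real.exp (-1)) ^ n := by
        funext n
        rw [← Real.exp_nat_mul]
        ring_nf
      rw [this]
      exact summable_geometric_of_lt_one (Real.exp_nonneg _)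
        (Real.exp_lt_one_iff.mpr (by norm_num))
    apply Summable.of_nat_of_neg <;> simpa using hnat
  apply Summable.of_nonneg_of_le (fun n => Real.exp_nonneg _) _
    (hgeo.mul_left (Real.exp ((a + 1) ^ 2 / (4 * c))))
  intro n
  rw [← Real.exp_add]
  apply Real.exp_le_exp.mpr
  have h1 : 0 ≤ (2 * c * |(n:ℝ)| - (a + 1)) ^ 2 := sq_nonneg _
  have h2 : (n : ℝ) ^ 2 = |(n : ℝ)| ^ 2 := (_root_.sq_abs _).symm
  rw [h2]
  have h3 : 0 < 4 * c := by linarith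
  rw [div_add' _ _ _ (ne_of_gt h3), le_div_iff₀ h3]
  nlinarith [abs_nonneg ((n:ℝ))]

lemma summable_norm_gterm (x y τ : ℂ) (hτ : 0 < τ.im) :
    Summable fun p : ℤ × ℤ => ‖gterm x y τ p‖ := by
  set t := τ.im with ht
  set c : ℝ := Real.pi * t with hcdef
  have hc : 0 < c := mul_pos Real.pi_pos hτ
  set a : ℝ := 2 * c + 4 * |x.im| + 4 * |y.im| with hadef
  set M : ℝ := 2 * |x.im| + 2 * |y.im| with hMdef
  have hsum : Summable fun p : ℤ × ℤ =>
      Real.exp M * (Real.exp (a * |(p.1 : ℝ)| - c * (p.1 : ℝ) ^ 2) *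
        Real.exp (a * |(p.2 : ℝ)| - c * (p.2 : ℝ) ^ 2)) :=
    (Summable.mul_of_nonneg (summable_exp_int a c hc) (summable_exp_int a c hc)
      (fun _ => Real.exp_nonneg _) (fun _ => Real.exp_nonneg _)).mul_left _
  apply Summable.of_nonneg_of_le (fun _ => norm_nonneg _) _ hsum
  intro p
  rw [norm_gterm, ← Real.exp_add, ← Real.exp_add]
  apply Real.exp_le_exp.mpr
  obtain ⟨k, l⟩ := p
  simp only [CQr, CAr, CBr]
  set K := (k : ℝ); set L := (l : ℝ)
  have hKK : K ≤ |K| := le_abs_self K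
  have hKK' : -K ≤ |K| := neg_le_abs K
  have hLL : L ≤ |L| := le_abs_self L
  have hLL' : -L ≤ |L| := neg_le_abs L
  have hxK : -(x.im * K) ≤ |x.im| * |K| := by rw [← abs_mul]; exact neg_le_abs _
  have hxK2 : x.im * K ≤ |x.im| * |K| := by rw [← abs_mul]; exact le_abs_self _
  have hxL : -(x.im * L) ≤ |x.im| * |L| := by rw [← abs_mul]; exact neg_le_abs _
  have hxL2 : x.im * L ≤ |x.im| * |L| := by rw [← abs_mul]; exact le_abs_self _
  have hyK : -(y.im * K) ≤ |y.im| * |K| := by rw [← abs_mul]; exact neg_le_abs _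
  have hyK2 : y.im * K ≤ |y.im| * |K| := by rw [← abs_mul]; exact le_abs_self _
  have hyL : -(y.im * L) ≤ |y.im| * |L| := by rw [← abs_mul]; exact neg_le_abs _
  have hyL2 : y.im * L ≤ |y.im| * |L| := by rw [← abs_mul]; exact le_abs_self _
  have hx0 : -x.im ≤ |x.im| := neg_le_abs _
  have hy0 : -y.im ≤ |y.im| := neg_le_abs _
  have hx0' : (0:ℝ) ≤ |x.im| := abs_nonneg _
  have hy0' : (0:ℝ) ≤ |y.im| := abs_nonneg _
  have hK0 : (0:ℝ) ≤ |K| := abs_nonneg _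
  have hL0 : (0:ℝ) ≤ |L| := abs_nonneg _
  have hq : 0 ≤ c * (K + L) ^ 2 := mul_nonneg hc.le (sq_nonneg _)
  have hcK : c * (-K) ≤ c * |K| := mul_le_mul_of_nonneg_left hKK' hc.le
  have hcL : c * (-L) ≤ c * |L| := mul_le_mul_of_nonneg_left hLL' hc.le
  have hK2 : K ^ 2 = |K| ^ 2 := (_root_.sq_abs K).symm
  have hL2 : L ^ 2 = |L| ^ 2 := (_root_.sq_abs L).symm
  have hprod1 : 0 ≤ |x.im| * |K| := mul_nonneg hx0' hK0
  have hprod2 : 0 ≤ |y.im| * |L| := mul_nonneg hy0' hL0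
  have hc3 : 0 ≤ c := hc.le
  nlinarith [hq, hcK, hcL]

lemma Cfun_eq (x y τ : ℂ) (hτ : 0 < τ.im) :
    Cfun x y τ = ∑' p : ℤ × ℤ, gterm x y τ p := by
  have hs : Summable (gterm x y τ) := (summable_norm_gterm x y τ hτ).of_norm
  rw [Cfun, Summable.tsum_prod' hs hs.prod_factor, ← tsum_mul_left]
  refine tsum_congr fun k => ?_
  rw [← tsum_mul_left]
  refine tsum_congr fun l => ?_
  rw [gterm, ← Complex.exp_add, ← Complex.exp_add, ← Complex.exp_add]
  congr 1
  push_cast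
  ring

/-- index type for the cube of the series -/
abbrev PT := (ℤ × ℤ) × (ℤ × ℤ) × (ℤ × ℤ)

noncomputable def Fterm (x y τ : ℂ) (p : PT) : ℂ :=
  gterm x y τ p.1 * (gterm x y τ p.2.1 * gterm x y τ p.2.2)

lemma summable_norm_F (x y τ : ℂ) (hτ : 0 < τ.im) :
    Summable fun p : PT => ‖Fterm x y τ p‖ := by
  have h := summable_norm_gterm x y τ hτ
  simpa [Fterm] using h.mul_norm (h.mul_norm h)

lemma cube_eq (x y τ : ℂ) (hτ : 0 < τ.im) :
    Cfun x y τ ^ 3 = ∑' p : PT, Fterm x y τ p := by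
  have h := summable_norm_gterm x y τ hτ
  rw [Cfun_eq x y τ hτ]
  rw [show (∑' p : ℤ × ℤ, gterm x y τ p) ^ 3
      = (∑' p : ℤ × ℤ, gterm x y τ p) * ((∑' p : ℤ × ℤ, gterm x y τ p)
        * (∑' p : ℤ × ℤ, gterm x y τ p)) from by ring]
  rw [tsum_mul_tsum_of_summable_norm h h, tsum_mul_tsum_of_summable_norm h (h.mul_norm h)]
  rfl

def intcls (p : PT) : ℤ := p.1.1 - p.1.2 + p.2.1.1 - p.2.1.2 + p.2.2.1 - p.2.2.2

def Asum (p : PT) : ℤ :=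
  (2 * p.1.2 + p.1.1 + 1) + (2 * p.2.1.2 + p.2.1.1 + 1) + (2 * p.2.2.2 + p.2.2.1 + 1)

lemma twist (x y τ s : ℂ) (p : PT) :
    Fterm (x + s) y τ p = Complex.exp (2 * I * s * (Asum p : ℂ)) * Fterm x y τ p := by
  simp only [Fterm, gterm, ← Complex.exp_add]
  congr 1
  simp only [Asum]
  push_cast
  ring

lemma class_factor (r : ℤ) (p : PT) (h : intcls p % 3 = r) :
    Complex.exp (2 * I * ((Real.pi : ℂ) / 3) * (Asum p : ℂ))
      = Complex.exp (2 * (Real.pi : ℂ) * I * (r : ℂ) / 3) := by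
  obtain ⟨q, hq⟩ : ∃ q : ℤ, Asum p = 3 * q + r :=
    ⟨intcls p / 3 + p.1.2 + p.2.1.2 + p.2.2.2 + 1, by unfold Asum intcls at *; omega⟩
  rw [hq]
  rw [show 2 * I * ((Real.pi : ℂ) / 3) * ((3 * q + r : ℤ) : ℂ)
      = 2 * (Real.pi : ℂ) * I * (r : ℂ) / 3 + (q : ℂ) * (2 * (Real.pi : ℂ) * I) from by
        push_cast; ring]
  rw [Complex.exp_add, Complex.exp_int_mul_two_pi_mul_I, mul_one]

lemma class_factor_neg (r : ℤ) (p : PT) (h : intcls p % 3 = r) :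
    Complex.exp (2 * I * (-((Real.pi : ℂ) / 3)) * (Asum p : ℂ))
      = Complex.exp (-(2 * (Real.pi : ℂ) * I * (r : ℂ) / 3)) := by
  obtain ⟨q, hq⟩ : ∃ q : ℤ, Asum p = 3 * q + r :=
    ⟨intcls p / 3 + p.1.2 + p.2.1.2 + p.2.2.2 + 1, by unfold Asum intcls at *; omega⟩
  rw [hq]
  rw [show 2 * I * (-((Real.pi : ℂ) / 3)) * ((3 * q + r : ℤ) : ℂ)
      = -(2 * (Real.pi : ℂ) * I * (r : ℂ) / 3) + ((-q : ℤ) : ℂ) * (2 * (Real.pi : ℂ) * I) from by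
        push_cast; ring]
  rw [Complex.exp_add, Complex.exp_int_mul_two_pi_mul_I, mul_one]

noncomputable def Scls (x y τ : ℂ) (r : ℤ) : ℂ :=
  ∑' p : PT, if intcls p % 3 = r then Fterm x y τ p else 0

lemma summable_ite (x y τ : ℂ) (hτ : 0 < τ.im) (r : ℤ) :
    Summable fun p : PT => if intcls p % 3 = r then Fterm x y τ p else 0 := by
  apply Summable.of_norm_bounded (summable_norm_F x y τ hτ)
  intro p
  by_cases h : intcls p % 3 = r <;> simp [h]

lemma tsum_split (x y τ : ℂ) (hτ : 0 < τ.im) :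
    ∑' p : PT, Fterm x y τ p = Scls x y τ 0 + Scls x y τ 1 + Scls x y τ 2 := by
  unfold Scls
  rw [← Summable.tsum_add (summable_ite x y τ hτ 0) (summable_ite x y τ hτ 1),
    ← Summable.tsum_add ((summable_ite x y τ hτ 0).add (summable_ite x y τ hτ 1))
      (summable_ite x y τ hτ 2)]
  refine tsum_congr fun p => ?_
  have h : intcls p % 3 = 0 ∨ intcls p % 3 = 1 ∨ intcls p % 3 = 2 := by omega
  rcases h with h | h | h <;> simp [h]

lemma piece (x y τ : ℂ) (r : ℤ) :
    Scls (x + (Real.pi : ℂ) / 3) y τ r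
      = Complex.exp (2 * (Real.pi : ℂ) * I * (r : ℂ) / 3) * Scls x y τ r := by
  unfold Scls
  rw [← tsum_mul_left]
  refine tsum_congr fun p => ?_
  by_cases h : intcls p % 3 = r
  · rw [if_pos h, if_pos h, twist x y τ ((Real.pi : ℂ) / 3) p, class_factor r p h]
  · simp [h]

lemma piece_neg (x y τ : ℂ) (r : ℤ) :
    Scls (x + -((Real.pi : ℂ) / 3)) y τ r
      = Complex.exp (-(2 * (Real.pi : ℂ) * I * (r : ℂ) / 3)) * Scls x y τ r := by
  unfold Scls
  rw [← tsum_mul_left]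
  refine tsum_congr fun p => ?_
  by_cases h : intcls p % 3 = r
  · rw [if_pos h, if_pos h, twist x y τ (-((Real.pi : ℂ) / 3)) p, class_factor_neg r p h]
  · simp [h]

/- ### The lattice bijections -/

abbrev Z6 := ℤ × ℤ × ℤ × ℤ × ℤ × ℤ

def epar (r : ℤ) : Z6 → PT := fun n =>
  ((3 * n.1 + r + n.2.1 + n.2.2.2.1 + n.2.2.2.2.2 - n.2.2.1 - n.2.2.2.2.1, n.2.1),
    (n.2.2.1, n.2.2.2.1), (n.2.2.2.2.1, n.2.2.2.2.2))

lemma epar_inj (r : ℤ) : Function.Injective (epar r) := by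
  intro n n' h
  obtain ⟨m, l0, k1, l1, k2, l2⟩ := n
  obtain ⟨m', l0', k1', l1', k2', l2'⟩ := n'
  simp only [epar, Prod.mk.injEq] at h ⊢
  omega

lemma reindex (x y τ : ℂ) (r : ℤ) (hr0 : 0 ≤ r) (hr3 : r < 3) :
    Scls x y τ r = ∑' n : Z6, Fterm x y τ (epar r n) := by
  unfold Scls
  rw [← Function.Injective.tsum_eq (epar_inj r) ?_]
  · refine tsum_congr fun n => ?_
    have hcl : intcls (epar r n) % 3 = r := by
      simp only [intcls, epar]
      omega
    rw [if_pos hcl]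
  · intro p hp
    have h : intcls p % 3 = r := by
      by_contra h
      simp [h] at hp
    obtain ⟨⟨k0, l0⟩, ⟨k1, l1⟩, ⟨k2, l2⟩⟩ := p
    refine ⟨((k0 - r - l0 - l1 - l2 + k1 + k2) / 3, l0, k1, l1, k2, l2), ?_⟩
    simp only [epar, Prod.mk.injEq]
    have h2 : (k0 - l0 + k1 - l1 + k2 - l2) % 3 = r := h
    have h3 : (k0 - r - l0 - l1 - l2 + k1 + k2) % 3 = 0 := by omega
    have h4 := Int.mul_ediv_add_emod (k0 - r - l0 - l1 - l2 + k1 + k2) 3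
    refine ⟨⟨by omega, trivial⟩, trivial⟩

def sig1 : Z6 ≃ Z6 where
  toFun := fun (m, l0, k1, l1, k2, l2) =>
    (-m-1, -m-l0-l1+k2-1, -m-l0-1, 2*m+l0-k1-k2, -m-l1-1, -m-l0+k1-l2-1)
  invFun := fun (m, l0, k1, l1, k2, l2) =>
    (-m-1, m-k1, -2*m-l0-l1+k2-2, m-k2, m+l0-k1-k2, -2*m-l0+k1-l1+k2-l2-2)
  left_inv := fun n => by
    obtain ⟨m, l0, k1, l1, k2, l2⟩ := n
    simp only [Prod.mk.injEq]
    omega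
  right_inv := fun n => by
    obtain ⟨m, l0, k1, l1, k2, l2⟩ := n
    simp only [Prod.mk.injEq]
    omega

def sig2 : Z6 ≃ Z6 where
  toFun := fun (m, l0, k1, l1, k2, l2) =>
    (-m-1, m-k2, m+l0-k1-k2, -2*m-l0+k1-l1+k2-l2-2, -2*m-l0+k1-l2-2, m-k1)
  invFun := fun (m, l0, k1, l1, k2, l2) =>
    (-m-1, -m-l0+k1-l2-1, -m-l2-1, -m-l0-l1+k2-1, -m-l0-1, 2*m+l0-k1-k2)
  left_inv := fun n => by
    obtain ⟨m, l0, k1, l1, k2, l2⟩ := n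
    simp only [Prod.mk.injEq]
    omega
  right_inv := fun n => by
    obtain ⟨m, l0, k1, l1, k2, l2⟩ := n
    simp only [Prod.mk.injEq]
    omega

lemma core1 (x y τ : ℂ) (hτ : 0 < τ.im) : Scls x y τ 1 = Scls (-x) (-y) τ 2 := by
  rw [reindex x y τ 1 (by norm_num) (by norm_num),
    reindex (-x) (-y) τ 2 (by norm_num) (by norm_num)]
  calc ∑' n : Z6, Fterm x y τ (epar 1 n)
      = ∑' n : Z6, Fterm (-x) (-y) τ (epar 2 (sig1 n)) := by
        refine tsum_congr fun n => ?_
        obtain ⟨m, l0, k1, l1, k2, l2⟩ := n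
        simp only [sig1, epar, Fterm, gterm, Equiv.coe_fn_mk, ← Complex.exp_add]
        congr 1
        push_cast
        ring
    _ = ∑' n : Z6, Fterm (-x) (-y) τ (epar 2 n) :=
        sig1.tsum_eq fun n => Fterm (-x) (-y) τ (epar 2 n)

lemma core2 (x y τ : ℂ) (hτ : 0 < τ.im) : Scls x y τ 2 = Scls (-x) (-y) τ 1 := by
  rw [reindex x y τ 2 (by norm_num) (by norm_num),
    reindex (-x) (-y) τ 1 (by norm_num) (by norm_num)]
  calc ∑' n : Z6, Fterm x y τ (epar 2 n)
      = ∑' n : Z6, Fterm (-x) (-y) τ (epar 1 (sig2 n)) := by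
        refine tsum_congr fun n => ?_
        obtain ⟨m, l0, k1, l1, k2, l2⟩ := n
        simp only [sig2, epar, Fterm, gterm, Equiv.coe_fn_mk, ← Complex.exp_add]
        congr 1
        push_cast
        ring
    _ = ∑' n : Z6, Fterm (-x) (-y) τ (epar 1 n) :=
        sig2.tsum_eq fun n => Fterm (-x) (-y) τ (epar 1 n)

/-- `C(x,y|τ)³ − C(−x,−y|τ)³` is invariant under `x ↦ x + π/3`. -/
theorem C_cube_difference_invariance (τ : ℂ) (hτ : 0 < τ.im) (x y : ℂ) :
    Cfun x y τ ^ 3 - Cfun (-x) (-y) τ ^ 3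
      = Cfun (x + (Real.pi : ℂ) / 3) y τ ^ 3 - Cfun (-x - (Real.pi : ℂ) / 3) (-y) τ ^ 3 := by
  have h1 : Cfun x y τ ^ 3 = Scls x y τ 0 + Scls x y τ 1 + Scls x y τ 2 := by
    rw [cube_eq x y τ hτ, tsum_split x y τ hτ]
  have h2 : Cfun (-x) (-y) τ ^ 3
      = Scls (-x) (-y) τ 0 + Scls (-x) (-y) τ 1 + Scls (-x) (-y) τ 2 := by
    rw [cube_eq (-x) (-y) τ hτ, tsum_split (-x) (-y) τ hτ]
  have h3 : Cfun (x + (Real.pi : ℂ) / 3) y τ ^ 3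
      = Scls x y τ 0 + Complex.exp (2 * (Real.pi : ℂ) * I * ((1 : ℤ) : ℂ) / 3) * Scls x y τ 1
        + Complex.exp (2 * (Real.pi : ℂ) * I * ((2 : ℤ) : ℂ) / 3) * Scls x y τ 2 := by
    rw [cube_eq (x + (Real.pi : ℂ) / 3) y τ hτ, tsum_split (x + (Real.pi : ℂ) / 3) y τ hτ,
      piece x y τ 0, piece x y τ 1, piece x y τ 2]
    norm_num
  have harg : -x - (Real.pi : ℂ) / 3 = -x + -((Real.pi : ℂ) / 3) := by ring
  have h4 : Cfun (-x - (Real.pi : ℂ) / 3) (-y) τ ^ 3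
      = Scls (-x) (-y) τ 0
        + Complex.exp (-(2 * (Real.pi : ℂ) * I * ((1 : ℤ) : ℂ) / 3)) * Scls (-x) (-y) τ 1
        + Complex.exp (-(2 * (Real.pi : ℂ) * I * ((2 : ℤ) : ℂ) / 3)) * Scls (-x) (-y) τ 2 := by
    rw [harg, cube_eq (-x + -((Real.pi : ℂ) / 3)) (-y) τ hτ,
      tsum_split (-x + -((Real.pi : ℂ) / 3)) (-y) τ hτ,
      piece_neg (-x) (-y) τ 0, piece_neg (-x) (-y) τ 1, piece_neg (-x) (-y) τ 2]
    norm_num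
  have e1 : Complex.exp (-(2 * (Real.pi : ℂ) * I * ((1 : ℤ) : ℂ) / 3))
      = Complex.exp (2 * (Real.pi : ℂ) * I * ((2 : ℤ) : ℂ) / 3) := by
    rw [show (2 * (Real.pi : ℂ) * I * ((2 : ℤ) : ℂ) / 3)
        = -(2 * (Real.pi : ℂ) * I * ((1 : ℤ) : ℂ) / 3) + 2 * (Real.pi : ℂ) * I from by
          push_cast; ring]
    rw [Complex.exp_add, Complex.exp_two_pi_mul_I, mul_one]
  have e2 : Complex.exp (-(2 * (Real.pi : ℂ) * I * ((2 : ℤ) : ℂ) / 3))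
      = Complex.exp (2 * (Real.pi : ℂ) * I * ((1 : ℤ) : ℂ) / 3) := by
    rw [show (2 * (Real.pi : ℂ) * I * ((1 : ℤ) : ℂ) / 3)
        = -(2 * (Real.pi : ℂ) * I * ((2 : ℤ) : ℂ) / 3) + 2 * (Real.pi : ℂ) * I from by
          push_cast; ring]
    rw [Complex.exp_add, Complex.exp_two_pi_mul_I, mul_one]
  rw [h1, h2, h3, h4, e1, e2, core1 x y τ hτ, core2 x y τ hτ]
  ring
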